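/- arXiv:1703.02459 — 4 statements merged into one kernel-verified Lean document; each statement's English description precedes it below -/
import Mathlib

section
/- Let T > 0 and let g : [0, T] → ℝ be a differentiable function with g(0) ≤ 0. If for every t ∈ [0, T] the implication (g(t) = 0 ⟹ g'(t) < 0) holds, then g(t) < 0 for every t ∈ (0, T]. -/
open Set Filter Topology

/-- Let T > 0 and let g : [0, T] → ℝ be a differentiable function with g(0) ≤ 0.
If for every t ∈ [0, T] the implication (g(t) = 0 ⟹ g'(t) < 0) holds, then
g(t) < 0 for every t ∈ (0, T]. -/
theorem stmt0 (T : ℝ) (hT : 0 < T) (g g' : ℝ → ℝ)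
    (hderiv : ∀ t ∈ Set.Icc (0 : ℝ) T, HasDerivWithinAt g (g' t) (Set.Icc (0 : ℝ) T) t)
    (h0 : g 0 ≤ 0)
    (hneg : ∀ t ∈ Set.Icc (0 : ℝ) T, g t = 0 → g' t < 0) :
    ∀ t ∈ Set.Ioc (0 : ℝ) T, g t < 0 := by
  intro t₀ ht₀
  obtain ⟨ht₀0, ht₀T⟩ := ht₀
  by_contra hc
  push_neg at hc
  set S : Set ℝ := {t | t ∈ Set.Ioc 0 t₀ ∧ 0 ≤ g t} with hSdef
  have hne : S.Nonempty := ⟨t₀, ⟨ht₀0, le_refl _⟩, hc⟩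
  have hbdd : BddBelow S := ⟨0, fun x hx => hx.1.1.le⟩
  set s := sInf S with hs
  have hs0 : 0 ≤ s := le_csInf hne fun x hx => hx.1.1.le
  have hst₀ : s ≤ t₀ := csInf_le hbdd ⟨⟨ht₀0, le_refl _⟩, hc⟩
  have hsIcc : s ∈ Icc (0:ℝ) T := ⟨hs0, hst₀.trans ht₀T⟩
  have hSsub : S ⊆ Icc (0:ℝ) T := fun x hx => ⟨hx.1.1.le, hx.1.2.trans ht₀T⟩
  have hclos : s ∈ closure S := csInf_mem_closure hne hbdd
  have hnb : (𝓝[S] s).NeBot := mem_closure_iff_nhdsWithin_neBot.mp hclos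
  have hcont : ContinuousWithinAt g (Icc (0:ℝ) T) s := (hderiv s hsIcc).continuousWithinAt
  -- g is nonneg at s (limit of points of S)
  have hg1 : 0 ≤ g s := by
    have htend : Tendsto g (𝓝[S] s) (𝓝 (g s)) := hcont.mono_left (nhdsWithin_mono _ hSsub)
    exact ge_of_tendsto htend (eventually_nhdsWithin_of_forall fun x hx => hx.2)
  -- g is negative strictly below s (in (0,s))
  have hneg' : ∀ t, 0 < t → t < s → g t < 0 := by
    intro t h1 h2
    by_contra h
    push_neg at h
    exact absurd (csInf_le hbdd ⟨⟨h1, (h2.trans_le hst₀).le⟩, h⟩) (not_le.mpr h2)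
  -- g s ≤ 0
  have hg2 : g s ≤ 0 := by
    rcases eq_or_lt_of_le hs0 with h | h
    · rw [← h]; exact h0
    · have hsub : Ioo (0:ℝ) s ⊆ Icc (0:ℝ) T :=
        fun x hx => ⟨hx.1.le, hx.2.le.trans hsIcc.2⟩
      have hnb2 : (𝓝[Ioo (0:ℝ) s] s).NeBot := by
        rw [← mem_closure_iff_nhdsWithin_neBot, closure_Ioo h.ne]
        exact ⟨hs0, le_refl _⟩
      have htend : Tendsto g (𝓝[Ioo (0:ℝ) s] s) (𝓝 (g s)) :=
        hcont.mono_left (nhdsWithin_mono _ hsub)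
      exact le_of_tendsto htend
        (eventually_nhdsWithin_of_forall fun x hx => (hneg' x hx.1 hx.2).le)
  have hgs : g s = 0 := le_antisymm hg2 hg1
  have hg' : g' s < 0 := hneg s hsIcc hgs
  have hslope : Tendsto (slope g s) (𝓝[Icc (0:ℝ) T \ {s}] s) (𝓝 (g' s)) :=
    hasDerivWithinAt_iff_tendsto_slope.mp (hderiv s hsIcc)
  -- derive 0 ≤ g' s, contradiction
  have : 0 ≤ g' s := by
    rcases eq_or_lt_of_le hs0 with h | h
    · -- s = 0 : approach through S
      have hsub : S ⊆ Icc (0:ℝ) T \ {s} :=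
        fun x hx => ⟨hSsub hx, by simp [← h]; exact hx.1.1.ne'⟩
      have htend : Tendsto (slope g s) (𝓝[S] s) (𝓝 (g' s)) :=
        hslope.mono_left (nhdsWithin_mono _ hsub)
      refine ge_of_tendsto htend (eventually_nhdsWithin_of_forall fun x hx => ?_)
      rw [slope_def_field, div_eq_mul_inv]
      apply mul_nonneg
      · rw [hgs, sub_zero]; exact hx.2
      · rw [← h, sub_zero]; exact (inv_nonneg).mpr hx.1.1.le
    · -- s > 0 : approach from the left through Ioo 0 s
      have hsub : Ioo (0:ℝ) s ⊆ Icc (0:ℝ) T \ {s} :=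
        fun x hx => ⟨⟨hx.1.le, hx.2.le.trans hsIcc.2⟩, hx.2.ne⟩
      have hnb2 : (𝓝[Ioo (0:ℝ) s] s).NeBot := by
        rw [← mem_closure_iff_nhdsWithin_neBot, closure_Ioo h.ne]
        exact ⟨hs0, le_refl _⟩
      have htend : Tendsto (slope g s) (𝓝[Ioo (0:ℝ) s] s) (𝓝 (g' s)) :=
        hslope.mono_left (nhdsWithin_mono _ hsub)
      refine ge_of_tendsto htend (eventually_nhdsWithin_of_forall fun x hx => ?_)
      rw [slope_def_field, hgs, sub_zero]
      exact le_of_lt (div_pos_of_neg_of_neg (hneg' x hx.1 hx.2) (by linarith [hx.2]))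
  linarith
end

section
/- Let n be a solution of the system on [0, ∞). If n_aB(0) < n_AB(0), then n_aB(t) ≤ n_AB(t) for all t ≥ 0. -/
noncomputable section
namespace NB

open Real Set Filter

/-- A state of the six-dimensional system; coordinates 0..5 stand for
the genotypes aa, aA, AA, aB, AB, BB respectively. -/
abbrev State := Fin 6 → ℝ

/-- Σ3 = n_aa + n_aA + n_AA. -/
def S3 (n : State) : ℝ := n 0 + n 1 + n 2
/-- Σ5 = n_aA + n_AA + n_aB + n_AB + n_BB. -/
def S5 (n : State) : ℝ := n 1 + n 2 + n 3 + n 4 + n 5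
/-- Σ6 = n_aa + n_aA + n_AA + n_aB + n_AB + n_BB. -/
def S6 (n : State) : ℝ := n 0 + n 1 + n 2 + n 3 + n 4 + n 5

/-- Birth rates (with Lean's convention x/0 = 0). -/
def birth (f : ℝ) (n : State) : State :=
  ![ f * n 0 * (n 0 + n 1 / 2) / S3 n
      + f * (n 3 / 2) * (n 1 / 2 + n 3 / 2) / S5 n
      + f * (n 1 / 2) * (n 0 + n 1 / 2 + n 3 / 2) / S6 n,
    f * n 0 * (n 1 / 2 + n 2) / S3 n
      + f * ((n 1 / 2) * (n 3 / 2 + n 4 / 2) + (n 3 / 2) * (n 2 + n 4)) / S5 n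
      + f * ((n 1 / 2 + n 2) * (n 0 + n 1 + n 3 / 2) + (n 1 / 4) * n 4) / S6 n,
    f * (n 4 / 2) * (n 1 / 2 + n 2 + n 4 / 2) / S5 n
      + f * (n 1 / 2 + n 2) * (n 1 / 2 + n 2 + n 4 / 2) / S6 n,
    f * (n 1 / 2 + n 3) * (n 3 / 2 + n 4 / 2 + n 5) / S5 n
      + f * (n 1 / 2) * (n 3 / 2 + n 4 / 2 + n 5) / S6 n,
    f * (n 1 / 2 + n 2 + n 4) * (n 3 / 2 + n 4 / 2 + n 5) / S5 n
      + f * (n 1 / 2 + n 2) * (n 3 / 2 + n 4 / 2 + n 5) / S6 n,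
    f * ((n 3 + n 4 + 2 * n 5) ^ 2 / 4) / S5 n ]

/-- Death rates. -/
def death (D Δ c η : ℝ) (n : State) : State :=
  ![ n 0 * (D + Δ + c * S3 n),
    n 1 * (D + c * (n 0 + n 1 + n 2 + n 3 + n 4) + (c - η) * n 5),
    n 2 * (D + c * S6 n),
    n 3 * (D - Δ + c * S5 n),
    n 4 * (D - Δ + c * S5 n),
    n 5 * (D - Δ + (c - η) * n 1 + c * (n 2 + n 3 + n 4 + n 5)) ]

/-- The vector field F = b − d. -/
def F (f D Δ c η : ℝ) (n : State) : State :=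
  fun i => birth f n i - death D Δ c η n i

/-- n̄_a = (f − D − Δ)/c. -/
def nbar_a (f D Δ c : ℝ) : ℝ := (f - D - Δ) / c
/-- n̄_A = (f − D)/c. -/
def nbar_A (f D c : ℝ) : ℝ := (f - D) / c
/-- n̄_B = (f − D + Δ)/c. -/
def nbar_B (f D Δ c : ℝ) : ℝ := (f - D + Δ) / c

/-- p_A = (0,0,n̄_A,0,0,0). -/
def pA (f D c : ℝ) : State := ![0, 0, nbar_A f D c, 0, 0, 0]
/-- p_B = (0,0,0,0,0,n̄_B). -/
def pB (f D Δ c : ℝ) : State := ![0, 0, 0, 0, 0, nbar_B f D Δ c]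
/-- p_aB = (n̄_a,0,0,0,0,n̄_B). -/
def paB (f D Δ c : ℝ) : State := ![nbar_a f D Δ c, 0, 0, 0, 0, nbar_B f D Δ c]

/-- A solution of the system on a set I: a differentiable curve with
n'(t) = F(n(t)), nonnegative coordinates and Σ3 > 0, Σ5 > 0 on I. -/
def IsSolution (f D Δ c η : ℝ) (I : Set ℝ) (n : ℝ → State) : Prop :=
  ∀ t ∈ I,
    (∀ i, HasDerivAt (fun s => n s i) (F f D Δ c η (n t) i) t) ∧
    (∀ i, 0 ≤ n t i) ∧ 0 < S3 (n t) ∧ 0 < S5 (n t)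

lemma Fdiff_eq (f D Δ c η : ℝ) (m : State)
    (h5 : S5 m ≠ 0) (h6 : S6 m ≠ 0) :
    F f D Δ c η m 4 - F f D Δ c η m 3 =
      (m 4 - m 3) * (f * (m 3 / 2 + m 4 / 2 + m 5) / S5 m - (D - Δ + c * S5 m))
      + f * m 2 * (m 3 / 2 + m 4 / 2 + m 5) * (1 / S5 m + 1 / S6 m) := by
  simp only [F, birth, death, S5, S6] at *
  norm_num [Matrix.cons_val_zero, Matrix.cons_val_one, Matrix.head_cons,
    Matrix.cons_val_two, Matrix.cons_val_three, Matrix.cons_val_four, Matrix.tail_cons]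
  field_simp
  ring

/-- If n_aB(0) < n_AB(0) then n_aB(t) ≤ n_AB(t) for all t ≥ 0. -/
theorem stmt6 (f D Δ c η : ℝ)
    (hΔ : 0 < Δ) (hΔD : Δ < D) (hDf : D < f) (hc : 0 < c)
    (hη0 : 0 ≤ η) (hηc : η < c)
    (n : ℝ → State) (hsol : IsSolution f D Δ c η (Set.Ici 0) n)
    (h0 : n 0 3 < n 0 4) :
    ∀ t : ℝ, 0 ≤ t → n t 3 ≤ n t 4 := by
  intro T hT
  by_contra hneg
  push_neg at hneg
  have hf : 0 < f := lt_trans (lt_trans hΔ hΔD) hDf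
  set g : ℝ → ℝ := fun s => n s 4 - n s 3 with hgdef
  have hS5pos : ∀ s ∈ Set.Ici (0:ℝ), 0 < S5 (n s) := fun s hs => (hsol s hs).2.2.2
  have hS6pos : ∀ s ∈ Set.Ici (0:ℝ), 0 < S6 (n s) := by
    intro s hs
    obtain ⟨_, hnn, h3, _⟩ := hsol s hs
    have h34 := hnn 3; have h4 := hnn 4; have h5 := hnn 5
    simp only [S3] at h3; simp only [S6]; linarith
  have hgderiv : ∀ s ∈ Set.Ici (0:ℝ), HasDerivAt g
      (F f D Δ c η (n s) 4 - F f D Δ c η (n s) 3) s := fun s hs =>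
    ((hsol s hs).1 4).sub ((hsol s hs).1 3)
  have hcont : ∀ (i : Fin 6), ∀ s ∈ Set.Ici (0:ℝ), ContinuousAt (fun u => n u i) s :=
    fun i s hs => ((hsol s hs).1 i).continuousAt
  have hgcont : ∀ s ∈ Set.Ici (0:ℝ), ContinuousAt g s := fun s hs =>
    (hgderiv s hs).continuousAt
  set Z : Set ℝ := Set.Icc 0 T ∩ g ⁻¹' Set.Iic 0 with hZdef
  have hZne : Z.Nonempty := ⟨T, ⟨hT, le_refl T⟩, by simpa [hgdef] using hneg.le⟩
  have hZbdd : BddBelow Z := ⟨0, fun x hx => hx.1.1⟩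
  have hZclosed : IsClosed Z := by
    have hco : ContinuousOn g (Set.Icc 0 T) := fun s hs => (hgcont s hs.1).continuousWithinAt
    exact hco.preimage_isClosed_of_isClosed isClosed_Icc isClosed_Iic
  set t₀ : ℝ := sInf Z with ht₀def
  have htZ : t₀ ∈ Z := hZclosed.csInf_mem hZne hZbdd
  have ht0 : 0 ≤ t₀ := htZ.1.1
  have htT : t₀ ≤ T := htZ.1.2
  have hgt₀ : g t₀ ≤ 0 := htZ.2
  have hgpos : ∀ s, 0 ≤ s → s < t₀ → 0 < g s := by
    intro s h0s hst
    by_contra hle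
    push_neg at hle
    have : s ∈ Z := ⟨⟨h0s, le_trans hst.le htT⟩, hle⟩
    exact absurd (csInf_le hZbdd this) (not_le.mpr hst)
  -- the coefficient function
  set H : ℝ → ℝ := fun s =>
    f * (n s 3 / 2 + n s 4 / 2 + n s 5) / S5 (n s) - (D - Δ + c * S5 (n s)) with hHdef
  have hHcont : ContinuousOn H (Set.Icc 0 t₀) := by
    intro s hs
    have hs' : s ∈ Set.Ici (0:ℝ) := hs.1
    have c3 := hcont 3 s hs'; have c4 := hcont 4 s hs'; have c5 := hcont 5 s hs'
    have cS5 : ContinuousAt (fun u => S5 (n u)) s := by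
      simp only [S5]
      exact ((((hcont 1 s hs').add (hcont 2 s hs')).add c3).add c4).add c5
    have hne : S5 (n s) ≠ 0 := (hS5pos s hs').ne'
    apply ContinuousAt.continuousWithinAt
    apply ContinuousAt.sub
    · exact ContinuousAt.div
        ((((c3.div_const 2).add (c4.div_const 2)).add c5).const_mul f) cS5 hne
    · exact continuousAt_const.add (cS5.const_mul c)
  obtain ⟨C, hC⟩ := isCompact_Icc.exists_bound_of_continuousOn hHcont
  set φ : ℝ → ℝ := fun s => g s * Real.exp (C * s) with hφdef
  have hφderiv : ∀ s ∈ Set.Ici (0:ℝ), HasDerivAt φ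
      ((F f D Δ c η (n s) 4 - F f D Δ c η (n s) 3) * Real.exp (C * s)
        + g s * (Real.exp (C * s) * C)) s := by
    intro s hs
    have he : HasDerivAt (fun u => Real.exp (C * u)) (Real.exp (C * s) * C) s := by
      simpa using ((hasDerivAt_id s).const_mul C).exp
    exact (hgderiv s hs).mul he
  have hsub : Set.Icc 0 t₀ ⊆ Set.Ici (0:ℝ) := fun x hx => hx.1
  have hmono : MonotoneOn φ (Set.Icc 0 t₀) := by
    apply monotoneOn_of_deriv_nonneg (convex_Icc 0 t₀)
    · exact fun s hs => ((hφderiv s (hsub hs)).continuousAt).continuousWithinAt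
    · intro x hx
      rw [interior_Icc] at hx
      exact ((hφderiv x (le_of_lt hx.1)).differentiableAt).differentiableWithinAt
    · intro x hx
      rw [interior_Icc] at hx
      have hx0 : x ∈ Set.Ici (0:ℝ) := hx.1.le
      rw [(hφderiv x hx0).deriv]
      have h5 : S5 (n x) ≠ 0 := (hS5pos x hx0).ne'
      have h6 : S6 (n x) ≠ 0 := (hS6pos x hx0).ne'
      rw [Fdiff_eq f D Δ c η (n x) h5 h6]
      have hgx : 0 < g x := hgpos x hx.1.le hx.2
      have hHC : 0 ≤ H x + C := by
        have := hC x ⟨hx.1.le, hx.2.le⟩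
        have := neg_abs_le (H x)
        rw [Real.norm_eq_abs] at *
        linarith
      have hR : 0 ≤ f * n x 2 * (n x 3 / 2 + n x 4 / 2 + n x 5)
          * (1 / S5 (n x) + 1 / S6 (n x)) := by
        have hnn := (hsol x hx0).2.1
        have h2 := hnn 2; have h3 := hnn 3; have h4 := hnn 4; have h5' := hnn 5
        have i5 : (0:ℝ) ≤ 1 / S5 (n x) := one_div_nonneg.mpr (hS5pos x hx0).le
        have i6 : (0:ℝ) ≤ 1 / S6 (n x) := one_div_nonneg.mpr (hS6pos x hx0).le
        apply mul_nonneg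
        apply mul_nonneg (mul_nonneg hf.le h2)
        · linarith
        · linarith
      have key : (g x * (f * (n x 3 / 2 + n x 4 / 2 + n x 5) / S5 (n x)
            - (D - Δ + c * S5 (n x)))
          + f * n x 2 * (n x 3 / 2 + n x 4 / 2 + n x 5) * (1 / S5 (n x) + 1 / S6 (n x)))
            * Real.exp (C * x) + g x * (Real.exp (C * x) * C)
        = (g x * (H x + C)
          + f * n x 2 * (n x 3 / 2 + n x 4 / 2 + n x 5) * (1 / S5 (n x) + 1 / S6 (n x)))
            * Real.exp (C * x) := by
        simp only [hHdef]; ring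
      have hgeq : n x 4 - n x 3 = g x := rfl
      rw [hgeq, key]
      exact mul_nonneg (add_nonneg (mul_nonneg hgx.le hHC) hR) (Real.exp_pos _).le
  have h01 : (0:ℝ) ∈ Set.Icc (0:ℝ) t₀ := ⟨le_refl 0, ht0⟩
  have h02 : t₀ ∈ Set.Icc (0:ℝ) t₀ := ⟨ht0, le_refl t₀⟩
  have := hmono h01 h02 ht0
  have hφ0 : φ 0 = g 0 := by simp [hφdef]
  have hφt : φ t₀ ≤ 0 := by
    have := Real.exp_pos (C * t₀)
    have : g t₀ * Real.exp (C * t₀) ≤ 0 :=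
      mul_nonpos_iff.mpr (Or.inr ⟨hgt₀, (Real.exp_pos _).le⟩)
    simpa [hφdef] using this
  have hg0 : 0 < g 0 := by simp [hgdef]; linarith
  rw [hφ0] at this
  linarith
end NB
end
end

section
/- Assume moreover c < f − D. There exists ε₀* > 0 (depending only on f, D, Δ, c, η, K₀) such that for all 0 < ε₀ < ε₀* and all 0 < ε < ε₀, in the Phase‑1 setting one has n_BB(t) ≤ n_AB(t)² for all t ∈ [0, T₁]. -/
noncomputable section
namespace NB

open Real Set Filter

/-- The set of times at which the total B/aA/aa perturbation has reached level ε₀. -/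
def hitSet (ε₀ : ℝ) (n : ℝ → State) : Set ℝ :=
  {t : ℝ | 0 ≤ t ∧ ε₀ ≤ n t 0 + n t 1 + n t 3 + n t 4 + n t 5}

/-- T₁ = inf{t ≥ 0 : n_aa + n_aA + n_aB + n_AB + n_BB ≥ ε₀}. -/
def T1 (ε₀ : ℝ) (n : ℝ → State) : ℝ := sInf (hitSet ε₀ n)

/-- Phase‑1 initial condition: n_aA(0) = ε, k₁·ε² ≤ n_aa(0) ≤ ε²,
n̄_A − C₀·ε ≤ n_AA(0) ≤ n̄_A, n_AB(0) = ε³, n_aB(0) = 0, n_BB(0) = 0. -/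
def Phase1Init (f D c : ℝ) (k₁ C₀ ε : ℝ) (n : ℝ → State) : Prop :=
  n 0 1 = ε ∧ k₁ * ε ^ 2 ≤ n 0 0 ∧ n 0 0 ≤ ε ^ 2 ∧
  nbar_A f D c - C₀ * ε ≤ n 0 2 ∧ n 0 2 ≤ nbar_A f D c ∧
  n 0 4 = ε ^ 3 ∧ n 0 3 = 0 ∧ n 0 5 = 0

lemma F3_eq (f D Δ c η : ℝ) (m : State) :
    F f D Δ c η m 3 =
      f * (m 1 / 2 + m 3) * (m 3 / 2 + m 4 / 2 + m 5) / S5 m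
      + f * (m 1 / 2) * (m 3 / 2 + m 4 / 2 + m 5) / S6 m
      - m 3 * (D - Δ + c * S5 m) := by
  simp [F, birth, death]

lemma F4_eq (f D Δ c η : ℝ) (m : State) :
    F f D Δ c η m 4 =
      f * (m 1 / 2 + m 2 + m 4) * (m 3 / 2 + m 4 / 2 + m 5) / S5 m
      + f * (m 1 / 2 + m 2) * (m 3 / 2 + m 4 / 2 + m 5) / S6 m
      - m 4 * (D - Δ + c * S5 m) := by
  simp [F, birth, death]

lemma F5_eq (f D Δ c η : ℝ) (m : State) :
    F f D Δ c η m 5 =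
      f * ((m 3 + m 4 + 2 * m 5) ^ 2 / 4) / S5 m
      - m 5 * (D - Δ + (c - η) * m 1 + c * (m 2 + m 3 + m 4 + m 5)) := by
  have h5 : (5 : Fin 6) = Fin.succ (Fin.succ (Fin.succ (Fin.succ (Fin.succ 0)))) := rfl
  simp [F, birth, death, h5, Matrix.cons_val_succ]

lemma pick_left {T' : ℝ} (hT : 0 < T') {p : ℝ → Prop}
    (hev : ∀ᶠ t in nhdsWithin T' (Iio T'), p t) : ∃ t, 0 < t ∧ t < T' ∧ p t := by
  have h2 : ∀ᶠ t in nhdsWithin T' (Iio T'), 0 < t :=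
    eventually_nhdsWithin_of_eventually_nhds (eventually_gt_nhds hT)
  have h3 : ∀ᶠ t in nhdsWithin T' (Iio T'), t < T' :=
    eventually_mem_nhdsWithin.mono fun t ht => ht
  obtain ⟨t, h1, h2', h3'⟩ := (hev.and (h2.and h3)).exists
  exact ⟨t, h2', h3', h1⟩

lemma no_touch {g : ℝ → ℝ} {t₀ g' : ℝ} (h : HasDerivAt g g' t₀) (ht : 0 < t₀)
    (hg0 : g t₀ = 0) (hpos : 0 < g') (hprev : ∀ t, 0 < t → t < t₀ → 0 ≤ g t) : False := by
  have hs := hasDerivAt_iff_tendsto_slope.1 h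
  have hmono : nhdsWithin t₀ (Iio t₀) ≤ nhdsWithin t₀ {t₀}ᶜ :=
    nhdsWithin_mono _ (fun x hx => ne_of_lt hx)
  have hev : ∀ᶠ t in nhdsWithin t₀ (Iio t₀), 0 < slope g t₀ t :=
    (hs.mono_left hmono).eventually (eventually_gt_nhds hpos)
  obtain ⟨t, htpos, htlt, hsl⟩ := pick_left ht hev
  have hge := hprev t htpos htlt
  rw [slope_def_field, hg0, sub_zero] at hsl
  rw [div_pos_iff] at hsl
  rcases hsl with ⟨h1, h2⟩ | ⟨h1, h2⟩ <;> linarith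

lemma keyh (f D Δ c η : ℝ) (hf : 0 < f) (m : State)
    (hm1 : 0 ≤ m 1) (hm2 : 0 < m 2) (hm4 : 0 < m 4) (h34 : m 3 = m 4)
    (hm5 : 0 ≤ m 5) (hs5 : 0 < S5 m) (hs6 : 0 < S6 m) :
    0 < F f D Δ c η m 4 - F f D Δ c η m 3 := by
  rw [F4_eq, F3_eq]
  have e : (f * (m 1 / 2 + m 2 + m 4) * (m 3 / 2 + m 4 / 2 + m 5) / S5 m
      + f * (m 1 / 2 + m 2) * (m 3 / 2 + m 4 / 2 + m 5) / S6 m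
      - m 4 * (D - Δ + c * S5 m))
      - (f * (m 1 / 2 + m 3) * (m 3 / 2 + m 4 / 2 + m 5) / S5 m
      + f * (m 1 / 2) * (m 3 / 2 + m 4 / 2 + m 5) / S6 m
      - m 3 * (D - Δ + c * S5 m))
      = f * m 2 * (m 4 / 2 + m 4 / 2 + m 5) / S5 m
        + f * m 2 * (m 4 / 2 + m 4 / 2 + m 5) / S6 m := by
    rw [h34]; ring
  rw [e]
  have hx : 0 < m 4 / 2 + m 4 / 2 + m 5 := by linarith
  positivity

lemma keyg (f D Δ c η K₀ a x : ℝ) (m : State)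
    (hf : 0 < f) (hc : 0 < c) (hη : 0 ≤ η) (hηc : η < c)
    (hm1 : 0 ≤ m 1) (hm3 : 0 ≤ m 3) (h34 : m 3 ≤ m 4) (hm4 : 0 < m 4)
    (hm4x : m 4 ≤ x) (h5 : m 5 = m 4 ^ 2)
    (hm2pos : 0 < a - K₀ * x) (hm2l : a - K₀ * x ≤ m 2)
    (hs5l : a - K₀ * x ≤ S5 m) (hs5u : S5 m ≤ a + (K₀ + 1) * x)
    (hs6l : S5 m ≤ S6 m) (hs6u : S6 m ≤ a + (K₀ + 1) * x)
    (hG : 0 < 2 * (f * (a - K₀ * x) / (a + (K₀ + 1) * x) - (D - Δ) - c * (a + (K₀ + 1) * x))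
            - (f * (1 + x) ^ 2 / (a - K₀ * x) - (D - Δ) - c * (a - K₀ * x))) :
    0 < 2 * m 4 * F f D Δ c η m 4 - F f D Δ c η m 5 := by
  rw [F4_eq, F5_eq]
  have hm2' : 0 < m 2 := lt_of_lt_of_le hm2pos hm2l
  have hs5 : 0 < S5 m := lt_of_lt_of_le hm2pos hs5l
  have hs6 : 0 < S6 m := lt_of_lt_of_le hs5 hs6l
  have hM : 0 < a + (K₀ + 1) * x := lt_of_lt_of_le hs5 hs5u
  have hm5 : 0 ≤ m 5 := by rw [h5]; positivity
  have hx : 0 ≤ x := le_trans hm4.le hm4x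
  have A1 : f * (a - K₀ * x) * (m 4 / 2) / (a + (K₀ + 1) * x)
      ≤ f * (m 1 / 2 + m 2 + m 4) * (m 3 / 2 + m 4 / 2 + m 5) / S5 m := by
    apply div_le_div₀ (by positivity) ?_ hs5 hs5u
    have e1 : f * (a - K₀ * x) ≤ f * (m 1 / 2 + m 2 + m 4) :=
      mul_le_mul_of_nonneg_left (by linarith) hf.le
    exact mul_le_mul e1 (by linarith) (by positivity) (by positivity)
  have A2 : f * (a - K₀ * x) * (m 4 / 2) / (a + (K₀ + 1) * x)
      ≤ f * (m 1 / 2 + m 2) * (m 3 / 2 + m 4 / 2 + m 5) / S6 m := by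
    apply div_le_div₀ (by positivity) ?_ hs6 hs6u
    have e1 : f * (a - K₀ * x) ≤ f * (m 1 / 2 + m 2) :=
      mul_le_mul_of_nonneg_left (by linarith) hf.le
    exact mul_le_mul e1 (by linarith) (by positivity) (by positivity)
  have B1 : m 4 * (D - Δ + c * S5 m) ≤ m 4 * (D - Δ + c * (a + (K₀ + 1) * x)) := by
    nlinarith [mul_nonneg hm4.le (mul_nonneg hc.le (sub_nonneg.2 hs5u))]
  have C1 : f * ((m 3 + m 4 + 2 * m 5) ^ 2 / 4) / S5 m
      ≤ f * (m 4 ^ 2 * (1 + x) ^ 2) / (a - K₀ * x) := by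
    apply div_le_div₀ (by positivity) ?_ hm2pos hs5l
    have hm44 : m 4 * m 4 ≤ m 4 * x := mul_le_mul_of_nonneg_left hm4x hm4.le
    have hub : m 3 + m 4 + 2 * m 5 ≤ 2 * m 4 * (1 + x) := by
      have : m 5 = m 4 * m 4 := by rw [h5]; ring
      linarith
    have hnn : 0 ≤ m 3 + m 4 + 2 * m 5 := by linarith
    have hsq := pow_le_pow_left₀ hnn hub 2
    have hexp : (2 * m 4 * (1 + x)) ^ 2 = 4 * (m 4 ^ 2 * (1 + x) ^ 2) := by ring
    have goal2 : (m 3 + m 4 + 2 * m 5) ^ 2 ≤ 4 * (m 4 ^ 2 * (1 + x) ^ 2) := by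
      rw [hexp] at hsq; exact hsq
    have := mul_le_mul_of_nonneg_left goal2 hf.le
    linarith
  have D1 : m 4 ^ 2 * (D - Δ + c * (a - K₀ * x))
      ≤ m 5 * (D - Δ + (c - η) * m 1 + c * (m 2 + m 3 + m 4 + m 5)) := by
    rw [h5]
    apply mul_le_mul_of_nonneg_left ?_ (by positivity)
    nlinarith [mul_nonneg (sub_nonneg.2 hηc.le) hm1, mul_nonneg hc.le hm3,
      mul_nonneg hc.le hm4.le, mul_nonneg hc.le hm5,
      mul_nonneg hc.le (sub_nonneg.2 hm2l)]
  have hsum : f * (a - K₀ * x) * m 4 / (a + (K₀ + 1) * x) - m 4 * (D - Δ + c * (a + (K₀ + 1) * x))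
      ≤ f * (m 1 / 2 + m 2 + m 4) * (m 3 / 2 + m 4 / 2 + m 5) / S5 m
        + f * (m 1 / 2 + m 2) * (m 3 / 2 + m 4 / 2 + m 5) / S6 m
        - m 4 * (D - Δ + c * S5 m) := by
    have e : f * (a - K₀ * x) * (m 4 / 2) / (a + (K₀ + 1) * x)
        + f * (a - K₀ * x) * (m 4 / 2) / (a + (K₀ + 1) * x)
        = f * (a - K₀ * x) * m 4 / (a + (K₀ + 1) * x) := by ring
    linarith [A1, A2, B1]
  have h2 := mul_le_mul_of_nonneg_left hsum (by positivity : (0:ℝ) ≤ 2 * m 4)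
  have hid : 2 * m 4 * (f * (a - K₀ * x) * m 4 / (a + (K₀ + 1) * x)
        - m 4 * (D - Δ + c * (a + (K₀ + 1) * x)))
      - (f * (m 4 ^ 2 * (1 + x) ^ 2) / (a - K₀ * x) - m 4 ^ 2 * (D - Δ + c * (a - K₀ * x)))
      = m 4 ^ 2 * (2 * (f * (a - K₀ * x) / (a + (K₀ + 1) * x) - (D - Δ) - c * (a + (K₀ + 1) * x))
          - (f * (1 + x) ^ 2 / (a - K₀ * x) - (D - Δ) - c * (a - K₀ * x))) := by
    ring
  have hfin := mul_pos (pow_pos hm4 2) hG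
  linarith [h2, C1, D1, hid, hfin]


set_option maxHeartbeats 2000000 in
/-- In the Phase‑1 setting, for ε₀ small enough: n_BB ≤ n_AB² on [0, T₁]. -/
theorem stmt9 (f D Δ c η K₀ : ℝ)
    (hΔ : 0 < Δ) (hΔD : Δ < D) (hDf : D < f) (hc : 0 < c)
    (hη0 : 0 ≤ η) (hηc : η < c) (hcfD : c < f - D) (hK₀ : 0 < K₀) :
    ∃ ε₀star > (0 : ℝ), ∀ ε₀ : ℝ, 0 < ε₀ → ε₀ < ε₀star →
      ∀ ε : ℝ, 0 < ε → ε < ε₀ →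
      ∀ k₁ C₀ : ℝ, 0 < k₁ → 0 < C₀ →
      ∀ n : ℝ → State, IsSolution f D Δ c η (Set.Ici 0) n →
        Phase1Init f D c k₁ C₀ ε n →
        (∀ t ∈ Set.Icc (0 : ℝ) (T1 ε₀ n), |n t 2 - nbar_A f D c| ≤ K₀ * ε₀) →
        ∀ t ∈ Set.Icc (0 : ℝ) (T1 ε₀ n), n t 5 ≤ (n t 4) ^ 2 := by
  have hf : 0 < f := lt_trans (lt_trans hΔ hΔD) hDf
  set a : ℝ := nbar_A f D c with ha_def
  clear_value a
  have ha1 : 1 < a := by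
    rw [ha_def]; unfold nbar_A; rw [lt_div_iff₀ hc]; linarith
  have ha0 : 0 < a := by linarith
  have hca : c * a = f - D := by
    rw [ha_def]; unfold nbar_A; field_simp
  set G : ℝ → ℝ := fun x =>
    2 * (f * (a - K₀ * x) / (a + (K₀ + 1) * x) - (D - Δ) - c * (a + (K₀ + 1) * x))
      - (f * (1 + x) ^ 2 / (a - K₀ * x) - (D - Δ) - c * (a - K₀ * x)) with hGdef
  clear_value G
  have hG0eq : G 0 = 2 * f - (D - Δ) - c * a - f / a := by
    rw [hGdef]; norm_num
    field_simp
    ring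
  have hG0 : 0 < G 0 := by
    rw [hG0eq]
    have h3 : f / a < f := div_lt_self hf ha1
    linarith [hca]
  have hGc : ContinuousAt G 0 := by
    rw [hGdef]
    have c2 : ContinuousAt (fun x : ℝ => a + (K₀ + 1) * x) 0 := by fun_prop
    have c3 : ContinuousAt (fun x : ℝ => f * (a - K₀ * x) / (a + (K₀ + 1) * x)) 0 :=
      ContinuousAt.div (by fun_prop) c2 (by simpa using ha0.ne')
    have c5 : ContinuousAt (fun x : ℝ => a - K₀ * x) 0 := by fun_prop
    have c6 : ContinuousAt (fun x : ℝ => f * (1 + x) ^ 2 / (a - K₀ * x)) 0 :=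
      ContinuousAt.div (by fun_prop) c5 (by simpa using ha0.ne')
    exact (((c3.sub continuousAt_const).sub (by fun_prop)).const_mul 2).sub
      ((c6.sub continuousAt_const).sub (by fun_prop))
  have e1 : ∀ᶠ x in nhds (0:ℝ), 0 < G x := hGc.eventually (eventually_gt_nhds hG0)
  have e2 : ∀ᶠ x in nhds (0:ℝ), 0 < a - K₀ * x := by
    have hcnt : ContinuousAt (fun x : ℝ => a - K₀ * x) 0 := by fun_prop
    have hv : (0:ℝ) < a - K₀ * 0 := by simpa using ha0
    exact hcnt.eventually (eventually_gt_nhds hv)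
  obtain ⟨δ, hδ, hball⟩ := Metric.eventually_nhds_iff.1 (e1.and e2)
  refine ⟨δ, hδ, ?_⟩
  intro ε₀ hε₀ hε₀δ ε hε hεε₀ k₁ C₀ hk₁ hC₀ n hsol hinit hK t htmem
  have hdist : dist ε₀ (0:ℝ) < δ := by
    rw [Real.dist_eq, sub_zero, abs_of_pos hε₀]; exact hε₀δ
  obtain ⟨hGε₀, hm2pos⟩ := hball hdist
  have hGval : 0 < 2 * (f * (a - K₀ * ε₀) / (a + (K₀ + 1) * ε₀) - (D - Δ) - c * (a + (K₀ + 1) * ε₀))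
      - (f * (1 + ε₀) ^ 2 / (a - K₀ * ε₀) - (D - Δ) - c * (a - K₀ * ε₀)) := by
    rw [hGdef] at hGε₀; exact hGε₀
  obtain ⟨ht0, htT⟩ := htmem
  rcases le_or_gt (T1 ε₀ n) 0 with hT0 | hTpos
  · have ht00 : t = 0 := le_antisymm (le_trans htT hT0) ht0
    rw [ht00, hinit.2.2.2.2.2.2.2]
    positivity
  have hder : ∀ τ, 0 ≤ τ → ∀ i, HasDerivAt (fun s => n s i) (F f D Δ c η (n τ) i) τ :=
    fun τ hτ => (hsol τ hτ).1
  have hnn : ∀ τ, 0 ≤ τ → ∀ i, 0 ≤ n τ i := fun τ hτ => (hsol τ hτ).2.1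
  have hS5pos : ∀ τ, 0 ≤ τ → 0 < S5 (n τ) := fun τ hτ => (hsol τ hτ).2.2.2
  have hbddA : BddBelow (hitSet ε₀ n) := ⟨0, fun x hx => hx.1⟩
  have hlt : ∀ τ, 0 ≤ τ → τ < T1 ε₀ n → n τ 0 + n τ 1 + n τ 3 + n τ 4 + n τ 5 < ε₀ := by
    intro τ hτ0 hτT
    by_contra hcon
    push_neg at hcon
    have hle : T1 ε₀ n ≤ τ := csInf_le hbddA ⟨hτ0, hcon⟩
    linarith
  have hsum : ∀ τ ∈ Icc (0:ℝ) (T1 ε₀ n),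
      n τ 0 + n τ 1 + n τ 3 + n τ 4 + n τ 5 ≤ ε₀ := by
    rintro τ ⟨hτ0, hτT⟩
    rcases eq_or_lt_of_le hτT with heq | hlt'
    swap
    · exact (hlt τ hτ0 hlt').le
    have hτpos : 0 < τ := by rw [heq]; exact hTpos
    by_contra hcon
    push_neg at hcon
    have hct : ContinuousAt (fun s => n s 0 + n s 1 + n s 3 + n s 4 + n s 5) τ := by
      have h0 := (hder τ hτ0 0).continuousAt
      have h1 := (hder τ hτ0 1).continuousAt
      have h3 := (hder τ hτ0 3).continuousAt
      have h4 := (hder τ hτ0 4).continuousAt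
      have h5 := (hder τ hτ0 5).continuousAt
      exact (((h0.add h1).add h3).add h4).add h5
    have hev : ∀ᶠ s in nhds τ, ε₀ < n s 0 + n s 1 + n s 3 + n s 4 + n s 5 :=
      hct.eventually (eventually_gt_nhds hcon)
    obtain ⟨s, hs0, hsτ, hsv⟩ := pick_left hτpos (hev.filter_mono nhdsWithin_le_nhds)
    exact absurd (hlt s hs0.le (by rw [← heq]; exact hsτ)) (not_lt.2 hsv.le)
  have hn2b : ∀ τ ∈ Icc (0:ℝ) (T1 ε₀ n), a - K₀ * ε₀ ≤ n τ 2 ∧ n τ 2 ≤ a + K₀ * ε₀ := by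
    intro τ hτ
    have h := abs_le.1 (hK τ hτ)
    exact ⟨by linarith [h.1], by linarith [h.2]⟩
  have hS5u : ∀ τ ∈ Icc (0:ℝ) (T1 ε₀ n), S5 (n τ) ≤ a + (K₀ + 1) * ε₀ := by
    intro τ hτ
    have h1 := hsum τ hτ
    have h2 := (hn2b τ hτ).2
    have h3 := hnn τ hτ.1 0
    simp only [S5]; linarith
  have hS5l : ∀ τ ∈ Icc (0:ℝ) (T1 ε₀ n), a - K₀ * ε₀ ≤ S5 (n τ) := by
    intro τ hτ
    have h2 := (hn2b τ hτ).1
    have g1 := hnn τ hτ.1 1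
    have g3 := hnn τ hτ.1 3
    have g4 := hnn τ hτ.1 4
    have g5 := hnn τ hτ.1 5
    simp only [S5]; linarith
  have hS6u : ∀ τ ∈ Icc (0:ℝ) (T1 ε₀ n), S6 (n τ) ≤ a + (K₀ + 1) * ε₀ := by
    intro τ hτ
    have h1 := hsum τ hτ
    have h2 := (hn2b τ hτ).2
    simp only [S6]; linarith
  have hS65 : ∀ τ, 0 ≤ τ → S5 (n τ) ≤ S6 (n τ) := by
    intro τ hτ
    have h0 := hnn τ hτ 0
    simp only [S5, S6]; linarith
  -- Gronwall lower bound for n _ 4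
  set L : ℝ := D - Δ + c * (a + (K₀ + 1) * ε₀) with hLdef
  clear_value L
  have hb4nn : ∀ τ ∈ Icc (0:ℝ) (T1 ε₀ n), 0 ≤ F f D Δ c η (n τ) 4 + L * n τ 4 := by
    intro τ hτ
    rw [F4_eq]
    have hs5 := hS5pos τ hτ.1
    have hs6 : 0 < S6 (n τ) := lt_of_lt_of_le hs5 (hS65 τ hτ.1)
    have g1 := hnn τ hτ.1 1
    have g2 := hnn τ hτ.1 2
    have g3 := hnn τ hτ.1 3
    have g4 := hnn τ hτ.1 4
    have g5 := hnn τ hτ.1 5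
    have hb1 : 0 ≤ f * (n τ 1 / 2 + n τ 2 + n τ 4) * (n τ 3 / 2 + n τ 4 / 2 + n τ 5) / S5 (n τ) := by
      positivity
    have hb2 : 0 ≤ f * (n τ 1 / 2 + n τ 2) * (n τ 3 / 2 + n τ 4 / 2 + n τ 5) / S6 (n τ) := by
      positivity
    have hd : n τ 4 * (D - Δ + c * S5 (n τ)) ≤ L * n τ 4 := by
      rw [hLdef]
      nlinarith [mul_nonneg g4 (mul_nonneg hc.le (sub_nonneg.2 (hS5u τ hτ)))]
    linarith
  set u : ℝ → ℝ := fun s => n s 4 * Real.exp (L * s) with hudef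
  clear_value u
  have huder : ∀ τ, 0 ≤ τ →
      HasDerivAt u ((F f D Δ c η (n τ) 4 + L * n τ 4) * Real.exp (L * τ)) τ := by
    intro τ hτ
    have h1 := hder τ hτ 4
    have h2 : HasDerivAt (fun s => Real.exp (L * s)) (Real.exp (L * τ) * L) τ := by
      have := (Real.hasDerivAt_exp (L * τ)).comp τ ((hasDerivAt_id τ).const_mul L)
      rw [mul_one] at this; exact this
    have h3 := h1.mul h2
    rw [hudef]
    refine h3.congr_deriv ?_
    ring
  have humono : MonotoneOn u (Icc 0 (T1 ε₀ n)) := by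
    apply monotoneOn_of_deriv_nonneg (convex_Icc 0 (T1 ε₀ n))
    · intro τ hτ; exact (huder τ hτ.1).continuousAt.continuousWithinAt
    · intro τ hτ
      rw [interior_Icc] at hτ
      exact (huder τ hτ.1.le).differentiableAt.differentiableWithinAt
    · intro τ hτ
      rw [interior_Icc] at hτ
      rw [(huder τ hτ.1.le).deriv]
      exact mul_nonneg (hb4nn τ ⟨hτ.1.le, hτ.2.le⟩) (Real.exp_pos _).le
  have hn4pos : ∀ τ ∈ Icc (0:ℝ) (T1 ε₀ n), 0 < n τ 4 := by
    intro τ hτ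
    have h1 : u 0 ≤ u τ := humono ⟨le_refl 0, hTpos.le⟩ hτ hτ.1
    have h2 : u 0 = ε ^ 3 := by
      rw [hudef]; simp [hinit.2.2.2.2.2.1]
    by_contra hle
    push_neg at hle
    have h4 : u τ ≤ 0 := by
      rw [hudef]
      show n τ 4 * Real.exp (L * τ) ≤ 0
      nlinarith [(Real.exp_pos (L * τ)).le]
    have := pow_pos hε 3
    linarith
  -- the barrier argument
  set g : ℝ → ℝ := fun s => (n s 4) ^ 2 - n s 5 with hgdef
  clear_value g
  set h : ℝ → ℝ := fun s => n s 4 - n s 3 with hhdef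
  clear_value h
  have hgct : ∀ τ, 0 ≤ τ → ContinuousAt g τ := by
    intro τ hτ
    rw [hgdef]
    exact ((hder τ hτ 4).continuousAt.pow 2).sub (hder τ hτ 5).continuousAt
  have hhct : ∀ τ, 0 ≤ τ → ContinuousAt h τ := by
    intro τ hτ
    rw [hhdef]
    exact (hder τ hτ 4).continuousAt.sub (hder τ hτ 3).continuousAt
  suffices hgoal : ∀ τ ∈ Icc (0:ℝ) (T1 ε₀ n), 0 ≤ g τ ∧ 0 ≤ h τ by
    have hgt := (hgoal t ⟨ht0, htT⟩).1
    rw [hgdef] at hgt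
    simp only at hgt
    linarith
  by_contra hcon
  push_neg at hcon
  obtain ⟨τw, hτw, hbad⟩ := hcon
  have hAne : ({τ | τ ∈ Icc (0:ℝ) (T1 ε₀ n) ∧ (g τ < 0 ∨ h τ < 0)} : Set ℝ).Nonempty := by
    refine ⟨τw, hτw, ?_⟩
    rcases le_or_gt 0 (g τw) with hg | hg
    · exact Or.inr (hbad hg)
    · exact Or.inl hg
  set A : Set ℝ := {τ | τ ∈ Icc (0:ℝ) (T1 ε₀ n) ∧ (g τ < 0 ∨ h τ < 0)} with hAdef
  clear_value A
  have hAmem : ∀ x ∈ A, x ∈ Icc (0:ℝ) (T1 ε₀ n) ∧ (g x < 0 ∨ h x < 0) := by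
    intro x hx; rw [hAdef] at hx; exact hx
  have hAmem' : ∀ x, x ∈ Icc (0:ℝ) (T1 ε₀ n) → (g x < 0 ∨ h x < 0) → x ∈ A := by
    intro x h1 h2; rw [hAdef]; exact ⟨h1, h2⟩
  have hAbdd : BddBelow A := ⟨0, fun x hx => (hAmem x hx).1.1⟩
  set t₀ := sInf A with ht₀def
  have ht₀mem : t₀ ∈ Icc (0:ℝ) (T1 ε₀ n) := by
    constructor
    · exact le_csInf hAne (fun x hx => (hAmem x hx).1.1)
    · obtain ⟨w, hw⟩ := hAne
      exact le_trans (csInf_le hAbdd hw) (hAmem w hw).1.2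
  have ht₀nonneg : 0 ≤ t₀ := ht₀mem.1
  have hprev : ∀ s, 0 ≤ s → s < t₀ → s ≤ T1 ε₀ n → 0 ≤ g s ∧ 0 ≤ h s := by
    intro s h0 hlt' hle
    rcases lt_or_ge (g s) 0 with hg | hg
    · exact absurd (csInf_le hAbdd (hAmem' s ⟨h0, hle⟩ (Or.inl hg))) (not_le.2 hlt')
    rcases lt_or_ge (h s) 0 with hh | hh
    · exact absurd (csInf_le hAbdd (hAmem' s ⟨h0, hle⟩ (Or.inr hh))) (not_le.2 hlt')
    exact ⟨hg, hh⟩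
  have hg00 : 0 < g 0 := by
    rw [hgdef]
    simp only
    rw [hinit.2.2.2.2.2.1, hinit.2.2.2.2.2.2.2]
    have := pow_pos hε 3
    nlinarith
  have hh00 : 0 < h 0 := by
    rw [hhdef]
    simp only
    rw [hinit.2.2.2.2.2.1, hinit.2.2.2.2.2.2.1]
    have := pow_pos hε 3
    nlinarith
  have hgh_nonneg : 0 ≤ g t₀ ∧ 0 ≤ h t₀ := by
    rcases eq_or_lt_of_le ht₀nonneg with heq | hpos
    · rw [← heq]; exact ⟨hg00.le, hh00.le⟩
    constructor
    · by_contra hneg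
      push_neg at hneg
      have hev := (hgct t₀ ht₀nonneg).eventually (eventually_lt_nhds hneg)
      obtain ⟨s, hs0, hst, hgs⟩ := pick_left hpos (hev.filter_mono nhdsWithin_le_nhds)
      exact absurd (csInf_le hAbdd
        (hAmem' s ⟨hs0.le, le_trans hst.le ht₀mem.2⟩ (Or.inl hgs))) (not_le.2 hst)
    · by_contra hneg
      push_neg at hneg
      have hev := (hhct t₀ ht₀nonneg).eventually (eventually_lt_nhds hneg)
      obtain ⟨s, hs0, hst, hhs⟩ := pick_left hpos (hev.filter_mono nhdsWithin_le_nhds)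
      exact absurd (csInf_le hAbdd
        (hAmem' s ⟨hs0.le, le_trans hst.le ht₀mem.2⟩ (Or.inr hhs))) (not_le.2 hst)
  have htouch : g t₀ = 0 ∨ h t₀ = 0 := by
    by_contra hcc
    push_neg at hcc
    have hgpos := lt_of_le_of_ne hgh_nonneg.1 (Ne.symm hcc.1)
    have hhpos := lt_of_le_of_ne hgh_nonneg.2 (Ne.symm hcc.2)
    have hev := ((hgct t₀ ht₀nonneg).eventually (eventually_gt_nhds hgpos)).and
      ((hhct t₀ ht₀nonneg).eventually (eventually_gt_nhds hhpos))
    obtain ⟨δ', hδ', hb⟩ := Metric.eventually_nhds_iff.1 hev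
    obtain ⟨w, hwA, hww⟩ := Real.lt_sInf_add_pos hAne hδ'
    have hwt₀ : t₀ ≤ w := csInf_le hAbdd hwA
    have hdw : dist w t₀ < δ' := by
      rw [Real.dist_eq, abs_of_nonneg (by linarith)]
      rw [ht₀def]; linarith [hww]
    have hw2 := hb hdw
    rcases (hAmem w hwA).2 with h' | h' <;> linarith [hw2.1, hw2.2]
  have ht₀pos : 0 < t₀ := by
    rcases eq_or_lt_of_le ht₀nonneg with heq | hp
    · exfalso
      rcases htouch with h' | h' <;> rw [← heq] at h' <;> linarith
    · exact hp
  -- state bounds at t₀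
  have hnnt := hnn t₀ ht₀nonneg
  have hsumt := hsum t₀ ht₀mem
  have hn2 := hn2b t₀ ht₀mem
  have hs5lt := hS5l t₀ ht₀mem
  have hs5ut := hS5u t₀ ht₀mem
  have hs6ut := hS6u t₀ ht₀mem
  have hs65t := hS65 t₀ ht₀nonneg
  have hn4t := hn4pos t₀ ht₀mem
  have hn4ub : n t₀ 4 ≤ ε₀ := by
    have g0 := hnnt 0
    have g1 := hnnt 1
    have g3 := hnnt 3
    have g5 := hnnt 5
    linarith
  have hprev' : ∀ s, 0 < s → s < t₀ → 0 ≤ g s ∧ 0 ≤ h s :=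
    fun s hs0 hst => hprev s hs0.le hst (le_trans hst.le ht₀mem.2)
  rcases htouch with hg0 | hh0
  · -- the quadratic barrier is touched
    have h34 : n t₀ 3 ≤ n t₀ 4 := by
      have := hgh_nonneg.2
      rw [hhdef] at this
      simp only at this
      linarith
    have h5eq : n t₀ 5 = n t₀ 4 ^ 2 := by
      rw [hgdef] at hg0
      simp only at hg0
      linarith
    have hkey := keyg f D Δ c η K₀ a ε₀ (n t₀) hf hc hη0 hηc (hnnt 1) (hnnt 3) h34 hn4t
      hn4ub h5eq hm2pos hn2.1 hs5lt hs5ut hs65t hs6ut hGval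
    have hdg : HasDerivAt g
        (2 * n t₀ 4 * F f D Δ c η (n t₀) 4 - F f D Δ c η (n t₀) 5) t₀ := by
      rw [hgdef]
      have h4 := (hder t₀ ht₀nonneg 4).pow 2
      have h5 := hder t₀ ht₀nonneg 5
      have h45 := h4.sub h5
      refine h45.congr_deriv ?_
      push_cast
      ring
    exact absurd (no_touch hdg ht₀pos hg0 hkey (fun s hs0 hst => (hprev' s hs0 hst).1)) id
  · -- the linear barrier is touched
    have h34eq : n t₀ 3 = n t₀ 4 := by
      rw [hhdef] at hh0
      simp only at hh0
      linarith
    have hn2pos : 0 < n t₀ 2 := lt_of_lt_of_le hm2pos hn2.1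
    have hs6pos : 0 < S6 (n t₀) := lt_of_lt_of_le (hS5pos t₀ ht₀nonneg) hs65t
    have hkey := keyh f D Δ c η hf (n t₀) (hnnt 1) hn2pos hn4t h34eq (hnnt 5)
      (hS5pos t₀ ht₀nonneg) hs6pos
    have hdh : HasDerivAt h
        (F f D Δ c η (n t₀) 4 - F f D Δ c η (n t₀) 3) t₀ := by
      rw [hhdef]
      exact (hder t₀ ht₀nonneg 4).sub (hder t₀ ht₀nonneg 3)
    exact absurd (no_touch hdh ht₀pos hh0 hkey (fun s hs0 hst => (hprev' s hs0 hst).2)) id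

end NB
end
end

section
/- Assume moreover c < f − D. There exists ε₀* > 0 (depending only on f, D, Δ, c, η, K₀) such that for all 0 < ε₀ < ε₀* and all 0 < ε < ε₀, in the Phase‑1 setting one has n_aB(t) ≤ n_aA(t)·n_AB(t) for all t ∈ [0, T₁]. -/
noncomputable section
namespace NB

open Real Set Filter

set_option maxHeartbeats 1600000 in
private lemma mainineq (f D Δ c η K₀ ε₀ nb a b A2 x y z : ℝ)
    (hf : 0 < f) (hΔ : 0 < Δ) (hc : 0 < c) (hη : 0 ≤ η) (hηc : η ≤ c) (hΔD : Δ < D)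
    (hcn : c * nb = f - D) (hnb : 1 < nb)
    (hε₀ : 0 < ε₀) (hK : 0 < K₀)
    (c1 : K₀ * ε₀ ≤ (nb - 1) / 2) (c2 : (K₀ + 1) * ε₀ ≤ nb)
    (c3 : (f + c * (K₀ + 1)) * ε₀ ≤ f / (8 * nb))
    (ha : 0 ≤ a) (hb : 0 ≤ b) (hA2 : 0 ≤ A2) (hx : 0 ≤ x) (hy : 0 ≤ y) (hz : 0 ≤ z)
    (hS3 : 0 < a + b + A2) (hS5 : 0 < b + A2 + x + y + z)
    (hE : a + b + x + y + z ≤ ε₀)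
    (hA2l : nb - K₀ * ε₀ ≤ A2) (hA2u : A2 ≤ nb + K₀ * ε₀)
    (hh : 0 ≤ b * y - x) :
    -(D + 2 * c * nb) * (b * y - x) ≤
      (f * a * (b / 2 + A2) / (a + b + A2)
        + f * ((b / 2) * (x / 2 + y / 2) + (x / 2) * (A2 + y)) / (b + A2 + x + y + z)
        + f * ((b / 2 + A2) * (a + b + x / 2) + (b / 4) * y) / (a + b + A2 + x + y + z)
        - b * (D + c * (a + b + A2 + x + y) + (c - η) * z)) * y
      + b * (f * (b / 2 + A2 + y) * (x / 2 + y / 2 + z) / (b + A2 + x + y + z)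
        + f * (b / 2 + A2) * (x / 2 + y / 2 + z) / (a + b + A2 + x + y + z)
        - y * (D - Δ + c * (b + A2 + x + y + z)))
      - (f * (b / 2 + x) * (x / 2 + y / 2 + z) / (b + A2 + x + y + z)
        + f * (b / 2) * (x / 2 + y / 2 + z) / (a + b + A2 + x + y + z)
        - x * (D - Δ + c * (b + A2 + x + y + z))) := by
  have hS6 : 0 < a + b + A2 + x + y + z := by linarith
  have hA21 : 1 ≤ A2 := by nlinarith
  have hS5le : b + A2 + x + y + z ≤ 2 * nb := by nlinarith
  have hP : 0 ≤ x / 2 + y / 2 + z := by linarith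
  have hD : 0 < D := lt_trans hΔ hΔD
  -- Step A
  have eqA : b * (f * (b / 2 + A2 + y) * (x / 2 + y / 2 + z) / (b + A2 + x + y + z)
        + f * (b / 2 + A2) * (x / 2 + y / 2 + z) / (a + b + A2 + x + y + z))
      - (f * (b / 2 + x) * (x / 2 + y / 2 + z) / (b + A2 + x + y + z)
        + f * (b / 2) * (x / 2 + y / 2 + z) / (a + b + A2 + x + y + z))
      = f * (x / 2 + y / 2 + z) * (b * (A2 + b / 2 - 1 / 2) + (b * y - x)) / (b + A2 + x + y + z)
        + f * (x / 2 + y / 2 + z) * (b * (A2 + b / 2 - 1 / 2)) / (a + b + A2 + x + y + z) := by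
    field_simp
    ring
  have t2 : 0 ≤ f * (x / 2 + y / 2 + z) * (b * (A2 + b / 2 - 1 / 2)) / (a + b + A2 + x + y + z) := by
    apply div_nonneg _ hS6.le
    apply mul_nonneg (mul_nonneg hf.le hP)
    nlinarith
  have t1 : f * (y / 2) * (b / 2) / (b + A2 + x + y + z)
      ≤ f * (x / 2 + y / 2 + z) * (b * (A2 + b / 2 - 1 / 2) + (b * y - x)) / (b + A2 + x + y + z) := by
    apply div_le_div_of_nonneg_right ?_ hS5.le
    nlinarith [mul_nonneg hf.le (mul_nonneg hb hz), mul_nonneg hf.le (mul_nonneg hb hx),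
      mul_nonneg hf.le (mul_nonneg hy hb), mul_nonneg hf.le hh,
      mul_nonneg (mul_nonneg hf.le hP) hh,
      mul_nonneg (mul_nonneg hf.le hy) (mul_nonneg hb (by nlinarith : (0:ℝ) ≤ A2 + b/2 - 1)),
      mul_nonneg (mul_nonneg hf.le (by linarith : (0:ℝ) ≤ x/2 + z)) (by nlinarith : (0:ℝ) ≤ b * (A2 + b/2 - 1/2))]
  have t0 : f * b * y / (8 * nb) ≤ f * (y / 2) * (b / 2) / (b + A2 + x + y + z) := by
    rw [div_le_div_iff₀ (by positivity) hS5]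
    nlinarith [mul_nonneg (mul_nonneg hf.le hb) hy]
  have stepA : f * b * y / (8 * nb)
      ≤ b * (f * (b / 2 + A2 + y) * (x / 2 + y / 2 + z) / (b + A2 + x + y + z)
        + f * (b / 2 + A2) * (x / 2 + y / 2 + z) / (a + b + A2 + x + y + z))
      - (f * (b / 2 + x) * (x / 2 + y / 2 + z) / (b + A2 + x + y + z)
        + f * (b / 2) * (x / 2 + y / 2 + z) / (a + b + A2 + x + y + z)) := by
    rw [eqA]; linarith
  -- Step B
  have hb1 : 0 ≤ f * a * (b / 2 + A2) / (a + b + A2) := by positivity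
  have hb2 : 0 ≤ f * ((b / 2) * (x / 2 + y / 2) + (x / 2) * (A2 + y)) / (b + A2 + x + y + z) := by
    positivity
  have hb3 : f * (A2 * b) / (a + b + A2 + x + y + z)
      ≤ f * ((b / 2 + A2) * (a + b + x / 2) + (b / 4) * y) / (a + b + A2 + x + y + z) := by
    apply div_le_div_of_nonneg_right ?_ hS6.le
    nlinarith [mul_nonneg hf.le (mul_nonneg hb (by linarith : (0:ℝ) ≤ a + x/2)),
      mul_nonneg hf.le (mul_nonneg hA2 (by linarith : (0:ℝ) ≤ a + x/2)),
      mul_nonneg hf.le (mul_nonneg hb hy), mul_nonneg hf.le (mul_nonneg hb hb)]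
  have hb4 : f * (1 - ε₀) * b ≤ f * (A2 * b) / (a + b + A2 + x + y + z) := by
    rw [le_div_iff₀ hS6]
    nlinarith [mul_nonneg (mul_nonneg hf.le hb) (by nlinarith : (0:ℝ) ≤ ε₀ * A2 - (a+b+x+y+z)),
      mul_nonneg (mul_nonneg hf.le hb) (mul_nonneg hε₀.le (by linarith : (0:ℝ) ≤ a+b+x+y+z))]
  have hd : b * (D + c * (a + b + A2 + x + y) + (c - η) * z) ≤ b * (D + c * A2 + c * ε₀) := by
    apply mul_le_mul_of_nonneg_left ?_ hb
    nlinarith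
  have stepB : -((f + c * (K₀ + 1)) * ε₀) * b
      ≤ f * a * (b / 2 + A2) / (a + b + A2)
        + f * ((b / 2) * (x / 2 + y / 2) + (x / 2) * (A2 + y)) / (b + A2 + x + y + z)
        + f * ((b / 2 + A2) * (a + b + x / 2) + (b / 4) * y) / (a + b + A2 + x + y + z)
        - b * (D + c * (a + b + A2 + x + y) + (c - η) * z) := by
    have key : -((f + c * (K₀ + 1)) * ε₀) * b ≤ f * (1 - ε₀) * b - b * (D + c * A2 + c * ε₀) := by
      nlinarith [mul_le_mul_of_nonneg_left hA2u (mul_nonneg hc.le hb)]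
    linarith
  -- Step C
  have stepBy : -((f + c * (K₀ + 1)) * ε₀) * b * y
      ≤ (f * a * (b / 2 + A2) / (a + b + A2)
        + f * ((b / 2) * (x / 2 + y / 2) + (x / 2) * (A2 + y)) / (b + A2 + x + y + z)
        + f * ((b / 2 + A2) * (a + b + x / 2) + (b / 4) * y) / (a + b + A2 + x + y + z)
        - b * (D + c * (a + b + A2 + x + y) + (c - η) * z)) * y := by
    exact mul_le_mul_of_nonneg_right stepB hy
  have hcmp : -(f / (8 * nb)) * (b * y) ≤ -((f + c * (K₀ + 1)) * ε₀) * b * y := by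
    have : (f + c * (K₀ + 1)) * ε₀ * (b * y) ≤ f / (8 * nb) * (b * y) :=
      mul_le_mul_of_nonneg_right c3 (mul_nonneg hb hy)
    nlinarith
  have hdt : (D - Δ + c * (b + A2 + x + y + z)) * (b * y - x) ≤ (D + 2 * c * nb) * (b * y - x) := by
    apply mul_le_mul_of_nonneg_right ?_ hh
    nlinarith
  have expand : (f * a * (b / 2 + A2) / (a + b + A2)
        + f * ((b / 2) * (x / 2 + y / 2) + (x / 2) * (A2 + y)) / (b + A2 + x + y + z)
        + f * ((b / 2 + A2) * (a + b + x / 2) + (b / 4) * y) / (a + b + A2 + x + y + z)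
        - b * (D + c * (a + b + A2 + x + y) + (c - η) * z)) * y
      + b * (f * (b / 2 + A2 + y) * (x / 2 + y / 2 + z) / (b + A2 + x + y + z)
        + f * (b / 2 + A2) * (x / 2 + y / 2 + z) / (a + b + A2 + x + y + z)
        - y * (D - Δ + c * (b + A2 + x + y + z)))
      - (f * (b / 2 + x) * (x / 2 + y / 2 + z) / (b + A2 + x + y + z)
        + f * (b / 2) * (x / 2 + y / 2 + z) / (a + b + A2 + x + y + z)
        - x * (D - Δ + c * (b + A2 + x + y + z)))
      = (f * a * (b / 2 + A2) / (a + b + A2)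
        + f * ((b / 2) * (x / 2 + y / 2) + (x / 2) * (A2 + y)) / (b + A2 + x + y + z)
        + f * ((b / 2 + A2) * (a + b + x / 2) + (b / 4) * y) / (a + b + A2 + x + y + z)
        - b * (D + c * (a + b + A2 + x + y) + (c - η) * z)) * y
      + (b * (f * (b / 2 + A2 + y) * (x / 2 + y / 2 + z) / (b + A2 + x + y + z)
        + f * (b / 2 + A2) * (x / 2 + y / 2 + z) / (a + b + A2 + x + y + z))
      - (f * (b / 2 + x) * (x / 2 + y / 2 + z) / (b + A2 + x + y + z)
        + f * (b / 2) * (x / 2 + y / 2 + z) / (a + b + A2 + x + y + z)))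
      - (D - Δ + c * (b + A2 + x + y + z)) * (b * y - x) := by ring
  have atom : f * b * y / (8 * nb) = f / (8 * nb) * (b * y) := by ring
  linarith [stepA, stepBy, hcmp, hdt, expand, atom]

/-- Pointwise key inequality, phrased for the vector field `F`. -/
private lemma keyF (f D Δ c η K₀ ε₀ : ℝ)
    (hf : 0 < f) (hΔ : 0 < Δ) (hc : 0 < c) (hη : 0 ≤ η) (hηc : η ≤ c) (hΔD : Δ < D)
    (hnb : 1 < (f - D) / c)
    (hε₀ : 0 < ε₀) (hK : 0 < K₀)
    (c1 : K₀ * ε₀ ≤ ((f - D) / c - 1) / 2) (c2 : (K₀ + 1) * ε₀ ≤ (f - D) / c)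
    (c3 : (f + c * (K₀ + 1)) * ε₀ ≤ f / (8 * ((f - D) / c)))
    (m : State) (hnn : ∀ i, 0 ≤ m i) (hS3 : 0 < S3 m) (hS5 : 0 < S5 m)
    (hE : m 0 + m 1 + m 3 + m 4 + m 5 ≤ ε₀)
    (hA2 : |m 2 - (f - D) / c| ≤ K₀ * ε₀)
    (hh : 0 ≤ m 1 * m 4 - m 3) :
    -(D + 2 * c * ((f - D) / c)) * (m 1 * m 4 - m 3) ≤
      F f D Δ c η m 1 * m 4 + m 1 * F f D Δ c η m 4 - F f D Δ c η m 3 := by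
  have e1 : F f D Δ c η m 1 = f * m 0 * (m 1 / 2 + m 2) / (m 0 + m 1 + m 2)
      + f * ((m 1 / 2) * (m 3 / 2 + m 4 / 2) + (m 3 / 2) * (m 2 + m 4)) / (m 1 + m 2 + m 3 + m 4 + m 5)
      + f * ((m 1 / 2 + m 2) * (m 0 + m 1 + m 3 / 2) + (m 1 / 4) * m 4) / (m 0 + m 1 + m 2 + m 3 + m 4 + m 5)
      - m 1 * (D + c * (m 0 + m 1 + m 2 + m 3 + m 4) + (c - η) * m 5) := rfl
  have e4 : F f D Δ c η m 4 = f * (m 1 / 2 + m 2 + m 4) * (m 3 / 2 + m 4 / 2 + m 5) / (m 1 + m 2 + m 3 + m 4 + m 5)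
      + f * (m 1 / 2 + m 2) * (m 3 / 2 + m 4 / 2 + m 5) / (m 0 + m 1 + m 2 + m 3 + m 4 + m 5)
      - m 4 * (D - Δ + c * (m 1 + m 2 + m 3 + m 4 + m 5)) := rfl
  have e3 : F f D Δ c η m 3 = f * (m 1 / 2 + m 3) * (m 3 / 2 + m 4 / 2 + m 5) / (m 1 + m 2 + m 3 + m 4 + m 5)
      + f * (m 1 / 2) * (m 3 / 2 + m 4 / 2 + m 5) / (m 0 + m 1 + m 2 + m 3 + m 4 + m 5)
      - m 3 * (D - Δ + c * (m 1 + m 2 + m 3 + m 4 + m 5)) := rfl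
  rw [e1, e3, e4]
  obtain ⟨hA2l, hA2u⟩ := abs_le.mp hA2
  have hcn : c * ((f - D) / c) = f - D := by field_simp
  have comm : m 1 * (f * (m 1 / 2 + m 2 + m 4) * (m 3 / 2 + m 4 / 2 + m 5) / (m 1 + m 2 + m 3 + m 4 + m 5)
      + f * (m 1 / 2 + m 2) * (m 3 / 2 + m 4 / 2 + m 5) / (m 0 + m 1 + m 2 + m 3 + m 4 + m 5)
      - m 4 * (D - Δ + c * (m 1 + m 2 + m 3 + m 4 + m 5))) = (f * (m 1 / 2 + m 2 + m 4) * (m 3 / 2 + m 4 / 2 + m 5) / (m 1 + m 2 + m 3 + m 4 + m 5)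
      + f * (m 1 / 2 + m 2) * (m 3 / 2 + m 4 / 2 + m 5) / (m 0 + m 1 + m 2 + m 3 + m 4 + m 5)
      - m 4 * (D - Δ + c * (m 1 + m 2 + m 3 + m 4 + m 5))) * m 1 := mul_comm _ _
  have := mainineq f D Δ c η K₀ ε₀ ((f - D) / c) (m 0) (m 1) (m 2) (m 3) (m 4) (m 5)
    hf hΔ hc hη hηc hΔD hcn hnb hε₀ hK c1 c2 c3
    (hnn 0) (hnn 1) (hnn 2) (hnn 3) (hnn 4) (hnn 5) hS3 hS5 hE (by linarith) (by linarith) hh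
  linarith [this, comm]

set_option maxHeartbeats 2000000 in
/-- In the Phase‑1 setting, for ε₀ small enough: n_aB ≤ n_aA·n_AB on [0, T₁]. -/
theorem stmt10 (f D Δ c η K₀ : ℝ)
    (hΔ : 0 < Δ) (hΔD : Δ < D) (hDf : D < f) (hc : 0 < c)
    (hη0 : 0 ≤ η) (hηc : η < c) (hcfD : c < f - D) (hK₀ : 0 < K₀) :
    ∃ ε₀star > (0 : ℝ), ∀ ε₀ : ℝ, 0 < ε₀ → ε₀ < ε₀star →
      ∀ ε : ℝ, 0 < ε → ε < ε₀ →
      ∀ k₁ C₀ : ℝ, 0 < k₁ → 0 < C₀ →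
      ∀ n : ℝ → State, IsSolution f D Δ c η (Set.Ici 0) n →
        Phase1Init f D c k₁ C₀ ε n →
        (∀ t ∈ Set.Icc (0 : ℝ) (T1 ε₀ n), |n t 2 - nbar_A f D c| ≤ K₀ * ε₀) →
        ∀ t ∈ Set.Icc (0 : ℝ) (T1 ε₀ n), n t 3 ≤ n t 1 * n t 4 := by
  have hf0 : (0:ℝ) < f := by linarith
  have hnb : 1 < (f - D) / c := (one_lt_div hc).mpr hcfD
  set nb := (f - D) / c with hnbdef
  have hnbpos : 0 < nb := lt_trans one_pos hnb
  have e1 : 0 < (nb - 1) / (2 * K₀) := div_pos (by linarith) (by positivity)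
  have e2 : 0 < nb / (K₀ + 1) := div_pos hnbpos (by positivity)
  have e3 : 0 < (f / (8 * nb)) / (f + c * (K₀ + 1)) := div_pos (by positivity) (by positivity)
  refine ⟨min ((nb - 1) / (2 * K₀)) (min (nb / (K₀ + 1)) ((f / (8 * nb)) / (f + c * (K₀ + 1)))),
    lt_min e1 (lt_min e2 e3), ?_⟩
  intro ε₀ hε₀ hε₀lt ε hε hεε₀ k₁ C₀ hk₁ hC₀ n hsol hinit hA2 t ht
  have c1 : K₀ * ε₀ ≤ (nb - 1) / 2 := by
    have h1 := lt_of_lt_of_le hε₀lt (min_le_left _ _)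
    rw [lt_div_iff₀ (by positivity)] at h1
    linarith
  have c2 : (K₀ + 1) * ε₀ ≤ nb := by
    have h1 := lt_of_lt_of_le hε₀lt ((min_le_right _ _).trans (min_le_left _ _))
    rw [lt_div_iff₀ (by positivity)] at h1
    linarith
  have c3 : (f + c * (K₀ + 1)) * ε₀ ≤ f / (8 * nb) := by
    have h1 := lt_of_lt_of_le hε₀lt ((min_le_right _ _).trans (min_le_right _ _))
    rw [lt_div_iff₀ (by positivity)] at h1
    linarith
  obtain ⟨i1, i2a, i2b, i3a, i3b, i4, i5, i6⟩ := hinit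
  have hh0 : n 0 1 * n 0 4 - n 0 3 = ε ^ 4 := by rw [i1, i4, i5]; ring
  have hε4 : (0:ℝ) < ε ^ 4 := by positivity
  by_contra hcon
  push_neg at hcon
  -- the set of times in [0, t] where the inequality fails
  set A : Set ℝ := {s : ℝ | s ∈ Set.Icc (0:ℝ) t ∧ n s 1 * n s 4 - n s 3 ≤ 0} with hAdef
  have htA : t ∈ A := ⟨⟨ht.1, le_refl t⟩, by linarith⟩
  have hAne : A.Nonempty := ⟨t, htA⟩
  have hAbdd : BddBelow A := ⟨0, fun s hs => hs.1.1⟩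
  set τ := sInf A with hτdef
  have hτ0 : 0 ≤ τ := le_csInf hAne fun s hs => hs.1.1
  have hτt : τ ≤ t := csInf_le hAbdd htA
  have hτT1 : τ ≤ T1 ε₀ n := le_trans hτt ht.2
  have hcont : ∀ i, ∀ s : ℝ, 0 ≤ s → ContinuousAt (fun u => n u i) s := fun i s hs =>
    ((hsol s hs).1 i).continuousAt
  have hconth : ∀ s : ℝ, 0 ≤ s → ContinuousAt (fun u => n u 1 * n u 4 - n u 3) s := fun s hs =>
    ((hcont 1 s hs).mul (hcont 4 s hs)).sub (hcont 3 s hs)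
  have hhτ : n τ 1 * n τ 4 - n τ 3 ≤ 0 := by
    have hcl : τ ∈ closure A := csInf_mem_closure hAne hAbdd
    haveI : (nhdsWithin τ A).NeBot := mem_closure_iff_nhdsWithin_neBot.mp hcl
    have hev : ∀ᶠ s in nhdsWithin τ A, n s 1 * n s 4 - n s 3 ≤ 0 :=
      eventually_nhdsWithin_of_forall fun s hs => hs.2
    exact le_of_tendsto ((hconth τ hτ0).continuousWithinAt.tendsto) hev
  set L : ℝ := D + 2 * c * nb with hLdef
  set g : ℝ → ℝ := fun s => (n s 1 * n s 4 - n s 3) * Real.exp (L * s) with hgdef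
  have hbddHit : BddBelow (hitSet ε₀ n) := ⟨0, fun u hu => hu.1⟩
  have mono : MonotoneOn g (Set.Icc 0 τ) := by
    refine monotoneOn_of_deriv_nonneg (convex_Icc (0:ℝ) τ) ?_ ?_ ?_
    · intro s hs
      exact ((hconth s hs.1).mul
        ((Real.continuous_exp.comp (continuous_const.mul continuous_id)).continuousAt)).continuousWithinAt
    · rw [interior_Icc]
      intro s hs
      have hsol' := hsol s (le_of_lt hs.1)
      have hd1 : HasDerivAt (fun u => n u 1 * n u 4 - n u 3)
          (F f D Δ c η (n s) 1 * n s 4 + n s 1 * F f D Δ c η (n s) 4 - F f D Δ c η (n s) 3) s :=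
        ((hsol'.1 1).mul (hsol'.1 4)).sub (hsol'.1 3)
      have hexp : HasDerivAt (fun u => Real.exp (L * u)) (Real.exp (L * s) * L) s := by
        simpa using ((hasDerivAt_id s).const_mul L).exp
      exact ((hd1.mul hexp).differentiableAt).differentiableWithinAt
    · rw [interior_Icc]
      intro s hs
      have hs0 : 0 ≤ s := le_of_lt hs.1
      have hsτ : s < τ := hs.2
      have hsT1 : s < T1 ε₀ n := lt_of_lt_of_le hsτ hτT1
      have hsol' := hsol s hs0
      have hd1 : HasDerivAt (fun u => n u 1 * n u 4 - n u 3)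
          (F f D Δ c η (n s) 1 * n s 4 + n s 1 * F f D Δ c η (n s) 4 - F f D Δ c η (n s) 3) s :=
        ((hsol'.1 1).mul (hsol'.1 4)).sub (hsol'.1 3)
      have hexp : HasDerivAt (fun u => Real.exp (L * u)) (Real.exp (L * s) * L) s := by
        simpa using ((hasDerivAt_id s).const_mul L).exp
      have hg : HasDerivAt g
          ((F f D Δ c η (n s) 1 * n s 4 + n s 1 * F f D Δ c η (n s) 4 - F f D Δ c η (n s) 3)
            * Real.exp (L * s) + (n s 1 * n s 4 - n s 3) * (Real.exp (L * s) * L)) s := by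
        exact hd1.mul hexp
      have hE : n s 0 + n s 1 + n s 3 + n s 4 + n s 5 ≤ ε₀ := by
        by_contra hEc
        push_neg at hEc
        have : s ∈ hitSet ε₀ n := ⟨hs0, le_of_lt hEc⟩
        exact absurd (csInf_le hbddHit this) (not_le.mpr hsT1)
      have hhs : 0 ≤ n s 1 * n s 4 - n s 3 := by
        by_contra hhc
        push_neg at hhc
        have hsA : s ∈ A := ⟨⟨hs0, le_of_lt (lt_of_lt_of_le hsτ hτt)⟩, le_of_lt hhc⟩
        exact absurd (csInf_le hAbdd hsA) (not_le.mpr hsτ)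
      have hA2s := hA2 s ⟨hs0, le_of_lt hsT1⟩
      rw [nbar_A] at hA2s
      have key := keyF f D Δ c η K₀ ε₀ hf0 hΔ hc hη0 (le_of_lt hηc) hΔD hnb hε₀ hK₀
        c1 c2 c3 (n s) (hsol'.2.1) (hsol'.2.2.1) (hsol'.2.2.2) hE hA2s hhs
      rw [hg.deriv]
      have hepos := Real.exp_pos (L * s)
      have hsum : 0 ≤ (F f D Δ c η (n s) 1 * n s 4 + n s 1 * F f D Δ c η (n s) 4
          - F f D Δ c η (n s) 3) + L * (n s 1 * n s 4 - n s 3) := by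
        rw [hLdef]; linarith [key]
      nlinarith [mul_nonneg hsum hepos.le]
  have hg0 : g 0 = ε ^ 4 := by
    simp only [hgdef, hh0, mul_zero, Real.exp_zero, mul_one]
  have hgτ : g τ ≤ 0 := mul_nonpos_of_nonpos_of_nonneg hhτ (Real.exp_pos _).le
  have := mono (Set.mem_Icc.mpr ⟨le_refl 0, hτ0⟩) (Set.mem_Icc.mpr ⟨hτ0, le_refl τ⟩) hτ0
  rw [hg0] at this
  linarith


end NB
end
end
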